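/- Let x₁ be the smallest positive real root of the polynomial P(x) = 2x⁵ − 2x³ + x² + 2x − 1. Then P has exactly one root in the real interval (0,1), and 0.470 < x₁ < 0.471; moreover every other complex root z of P satisfies |z| > x₁. -/

import Mathlib

private lemma gpos : ∀ x y : ℝ, 0 ≤ x → x ≤ 1 → 0 ≤ y → y ≤ 1 →
    0 < 2*(y^4+y^3*x+y^2*x^2+y*x^3+x^4) - 2*(y^2+x*y+x^2) + (x+y) + 2 := by
  intro x y hx hx1 hy hy1
  nlinarith [sq_nonneg (x+y), sq_nonneg (x-y), sq_nonneg (x*y - 3/10), sq_nonneg (x^2+y^2-3/5), mul_nonneg hx hy, sq_nonneg (x^2-y^2), sq_nonneg (x*y)]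

private lemma pmono : ∀ x y : ℝ, 0 ≤ x → y ≤ 1 → x < y →
    2*x^5-2*x^3+x^2+2*x-1 < 2*y^5-2*y^3+y^2+2*y-1 := by
  intro x y hx hy1 hxy
  have h := gpos x y hx (hxy.le.trans hy1) (hx.trans hxy.le) hy1
  nlinarith [mul_pos (sub_pos.2 hxy) h]

theorem root_location :
    (∃! x : ℝ, x ∈ Set.Ioo (0 : ℝ) 1 ∧
        2 * x ^ 5 - 2 * x ^ 3 + x ^ 2 + 2 * x - 1 = 0) ∧
    ∀ x₁ : ℝ, x₁ ∈ Set.Ioo (0 : ℝ) 1 →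
      2 * x₁ ^ 5 - 2 * x₁ ^ 3 + x₁ ^ 2 + 2 * x₁ - 1 = 0 →
      (0.470 < x₁ ∧ x₁ < 0.471 ∧
        ∀ z : ℂ, 2 * z ^ 5 - 2 * z ^ 3 + z ^ 2 + 2 * z - 1 = 0 → z ≠ (x₁ : ℂ) →
          x₁ < ‖z‖) := by
  set f : ℝ → ℝ := fun x => 2 * x ^ 5 - 2 * x ^ 3 + x ^ 2 + 2 * x - 1 with hf
  have hcont : ContinuousOn f (Set.Icc 0.470 0.471) := by
    apply Continuous.continuousOn; continuity
  have hlow : f 0.470 < 0 := by norm_num [hf]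
  have hhigh : 0 < f 0.471 := by norm_num [hf]
  have hmem : (0:ℝ) ∈ Set.Ioo (f 0.470) (f 0.471) := ⟨hlow, hhigh⟩
  obtain ⟨c, hc, hfc⟩ := intermediate_value_Ioo (by norm_num : (0.470:ℝ) ≤ 0.471) hcont hmem
  have hc01 : c ∈ Set.Ioo (0:ℝ) 1 := ⟨by linarith [hc.1], by linarith [hc.2]⟩
  -- uniqueness via strict monotonicity
  have huniq : ∀ x y : ℝ, x ∈ Set.Ioo (0:ℝ) 1 → y ∈ Set.Ioo (0:ℝ) 1 → f x = 0 → f y = 0 → x = y := by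
    intro x y hx hy hfx hfy
    simp only [hf] at hfx hfy
    rcases lt_trichotomy x y with h | h | h
    · exfalso; have := pmono x y hx.1.le hy.2.le h; linarith
    · exact h
    · exfalso; have := pmono y x hy.1.le hx.2.le h; linarith
  constructor
  · exact ⟨c, ⟨hc01, hfc⟩, fun y hy => huniq y c ⟨hy.1.1, hy.1.2⟩ hc01 hy.2 hfc⟩
  · intro a ha hroot
    have ha1 : (0.470:ℝ) < a := by
      by_contra h
      push_neg at h
      rcases eq_or_lt_of_le h with h' | h'
      · rw [h'] at hroot; norm_num at hroot
      · have := pmono a 0.470 ha.1.le (by norm_num) h'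
        simp only [hf] at hlow; linarith
    have ha2 : a < (0.471:ℝ) := by
      by_contra h
      push_neg at h
      rcases eq_or_lt_of_le h with h' | h'
      · rw [← h'] at hroot; norm_num at hroot
      · have := pmono 0.471 a (by norm_num) ha.2.le h'
        simp only [hf] at hhigh; linarith
    refine ⟨ha1, ha2, ?_⟩
    intro z hz hne
    clear! f c
    by_contra hcon
    push_neg at hcon
    set r : ℝ := ‖z‖ with hrdef
    clear_value r
    have hr0 : 0 ≤ r := hrdef ▸ norm_nonneg z
    -- complex version of the real root equation
    have haC : 2*(a:ℂ)^5 - 2*(a:ℂ)^3 + (a:ℂ)^2 + 2*(a:ℂ) - 1 = 0 := by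
      have : ((2 * a ^ 5 - 2 * a ^ 3 + a ^ 2 + 2 * a - 1 : ℝ) : ℂ) = 0 := by
        rw [hroot]; norm_num
      push_cast at this
      linear_combination this
    have hfactor : (z - (a:ℂ)) * (2*z^4 + 2*(a:ℂ)*z^3 + (2*(a:ℂ)^2-2)*z^2 +
        (2*(a:ℂ)^3-2*(a:ℂ)+1)*z + (2*(a:ℂ)^4-2*(a:ℂ)^2+(a:ℂ)+2)) = 0 := by
      linear_combination hz - haC
    have hzsub : z - (a:ℂ) ≠ 0 := sub_ne_zero.2 hne
    have hQ : 2*z^4 + 2*(a:ℂ)*z^3 + (2*(a:ℂ)^2-2)*z^2 +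
        (2*(a:ℂ)^3-2*(a:ℂ)+1)*z + (2*(a:ℂ)^4-2*(a:ℂ)^2+(a:ℂ)+2) = 0 :=
      (mul_eq_zero.1 hfactor).resolve_left hzsub
    have hb0 : ((2*a^4-2*a^2+a+2 : ℝ) : ℂ) =
        -(2*z^4 + ((2*a:ℝ):ℂ)*z^3 + ((2*a^2-2:ℝ):ℂ)*z^2 + ((2*a^3-2*a+1:ℝ):ℂ)*z) := by
      push_cast
      linear_combination hQ
    have hpos : (0:ℝ) < 2*a^4-2*a^2+a+2 := by nlinarith
    have hc2 : (0:ℝ) ≤ 2 - 2*a^2 := by nlinarith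
    have hc3 : (0:ℝ) ≤ 2*a^3-2*a+1 := by nlinarith
    have key : 2*a^4-2*a^2+a+2 ≤ 2*r^4 + (2*a)*r^3 + (2-2*a^2)*r^2 + (2*a^3-2*a+1)*r := by
      calc 2*a^4-2*a^2+a+2 = ‖((2*a^4-2*a^2+a+2 : ℝ) : ℂ)‖ := by
            rw [Complex.norm_real, Real.norm_eq_abs, abs_of_pos hpos]
        _ = ‖(2*z^4 + ((2*a:ℝ):ℂ)*z^3 + ((2*a^2-2:ℝ):ℂ)*z^2 + ((2*a^3-2*a+1:ℝ):ℂ)*z)‖ := by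
            rw [hb0, norm_neg]
        _ ≤ ‖(2*z^4)‖ + ‖(((2*a:ℝ):ℂ)*z^3)‖ +
              ‖(((2*a^2-2:ℝ):ℂ)*z^2)‖ + ‖(((2*a^3-2*a+1:ℝ):ℂ)*z)‖ := by
            refine le_trans (norm_add_le _ _) ?_
            refine add_le_add_left (le_trans (norm_add_le (E := ℂ) _ _) ?_) _
            exact add_le_add_left (norm_add_le (E := ℂ) _ _) _
        _ = 2*r^4 + |(2*a : ℝ)| * r^3 + |(2*a^2-2 : ℝ)| * r^2 + |(2*a^3-2*a+1 : ℝ)| * r := by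
            rw [norm_mul, norm_mul, norm_mul, norm_mul, norm_pow, norm_pow, norm_pow,
              Complex.norm_real, Complex.norm_real, Complex.norm_real, Real.norm_eq_abs, Real.norm_eq_abs,
              Real.norm_eq_abs, Complex.norm_two, hrdef]
        _ = 2*r^4 + (2*a)*r^3 + (2-2*a^2)*r^2 + (2*a^3-2*a+1)*r := by
            rw [abs_of_pos (by linarith [ha.1] : (0:ℝ) < 2*a), abs_of_nonneg hc3,
              show |(2*a^2-2 : ℝ)| = 2-2*a^2 by rw [abs_sub_comm]; exact abs_of_nonneg hc2]
    have hr2 : r^2 ≤ a^2 := by nlinarith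
    have hr3 : r^3 ≤ a^3 := by nlinarith
    have hr4 : r^4 ≤ a^4 := by nlinarith
    have h1 : 2*r^4 ≤ 2*a^4 := by linarith
    have h2 : (2*a)*r^3 ≤ (2*a)*a^3 :=
      mul_le_mul_of_nonneg_left hr3 (by linarith [ha.1] : (0:ℝ) ≤ 2*a)
    have h3 : (2-2*a^2)*r^2 ≤ (2-2*a^2)*a^2 := mul_le_mul_of_nonneg_left hr2 hc2
    have h4 : (2*a^3-2*a+1)*r ≤ (2*a^3-2*a+1)*a := mul_le_mul_of_nonneg_left hcon hc3
    have hS : 2*r^4 + (2*a)*r^3 + (2-2*a^2)*r^2 + (2*a^3-2*a+1)*r ≤ 4*a^4 + a := by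
      nlinarith [h1, h2, h3, h4]
    have hsq : a^2 < 0.222 := by nlinarith [ha.1]
    have hq4 : a^4 < 0.05 := by nlinarith [sq_nonneg a, hsq]
    linarith [key, hS]
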